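/- Let G be a graph whose complement contains no K_4. Let P_1 be a longest path in G, let P_2 be a longest path in G restricted to V(G) \ V(P_1), and let P_3 be a longest path in G restricted to V(G) \ (V(P_1) ∪ V(P_2)). Then V(G) = V(P_1) ∪ V(P_2) ∪ V(P_3). -/

import Mathlib

/-- If the complement of `G` contains no `K₄`, `P₁` is a longest path in `G`, `P₂` is a longest
path avoiding `P₁`, and `P₃` is a longest path avoiding `P₁` and `P₂`, then the three paths
cover all vertices. -/
theorem iterated_longest_paths_cover {V : Type*} [Fintype V] (G : SimpleGraph V)
    (hK4 : ¬ ∃ a b c d : V, [a, b, c, d].Nodup ∧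
      ¬ G.Adj a b ∧ ¬ G.Adj a c ∧ ¬ G.Adj a d ∧ ¬ G.Adj b c ∧ ¬ G.Adj b d ∧ ¬ G.Adj c d)
    (l1 l2 l3 : List V)
    (h1 : l1.Chain' G.Adj) (h1' : l1.Nodup)
    (h1max : ∀ l : List V, l.Chain' G.Adj → l.Nodup → l.length ≤ l1.length)
    (h2 : l2.Chain' G.Adj) (h2' : l2.Nodup) (h2d : ∀ v ∈ l2, v ∉ l1)
    (h2max : ∀ l : List V, l.Chain' G.Adj → l.Nodup → (∀ v ∈ l, v ∉ l1) →
      l.length ≤ l2.length)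
    (h3 : l3.Chain' G.Adj) (h3' : l3.Nodup) (h3d : ∀ v ∈ l3, v ∉ l1 ∧ v ∉ l2)
    (h3max : ∀ l : List V, l.Chain' G.Adj → l.Nodup → (∀ v ∈ l, v ∉ l1 ∧ v ∉ l2) →
      l.length ≤ l3.length) :
    ∀ v : V, v ∈ l1 ∨ v ∈ l2 ∨ v ∈ l3 := by
  intro v
  by_contra hv
  push_neg at hv
  obtain ⟨hv1, hv2, hv3⟩ := hv
  obtain ⟨a, t1, rfl⟩ : ∃ a t, l1 = a :: t := by
    cases l1 with
    | nil => simpa using h1max [v] (List.isChain_singleton v) (by simp)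
    | cons a t => exact ⟨a, t, rfl⟩
  obtain ⟨b, t2, rfl⟩ : ∃ b t, l2 = b :: t := by
    cases l2 with
    | nil => simpa using h2max [v] (List.isChain_singleton v) (by simp) (by simpa using hv1)
    | cons b t => exact ⟨b, t, rfl⟩
  obtain ⟨c, t3, rfl⟩ : ∃ c t, l3 = c :: t := by
    cases l3 with
    | nil =>
      simpa using h3max [v] (List.isChain_singleton v) (by simp) (fun x hx => by rcases List.mem_singleton.mp hx with rfl; exact ⟨hv1, hv2⟩)
    | cons c t => exact ⟨c, t, rfl⟩
  have ha1 : a ∈ a :: t1 := List.mem_cons_self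
  have hb2 : b ∈ b :: t2 := List.mem_cons_self
  have hc3 : c ∈ c :: t3 := List.mem_cons_self
  have hbl1 : b ∉ a :: t1 := h2d b hb2
  have hcl1 : c ∉ a :: t1 := (h3d c hc3).1
  have hcl2 : c ∉ b :: t2 := (h3d c hc3).2
  have hab : ¬ G.Adj a b := fun h =>
    absurd (h1max (b :: a :: t1) (List.isChain_cons_cons.mpr ⟨h.symm, h1⟩)
      (List.nodup_cons.mpr ⟨hbl1, h1'⟩)) (by simp)
  have hac : ¬ G.Adj a c := fun h =>
    absurd (h1max (c :: a :: t1) (List.isChain_cons_cons.mpr ⟨h.symm, h1⟩)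
      (List.nodup_cons.mpr ⟨hcl1, h1'⟩)) (by simp)
  have hav : ¬ G.Adj a v := fun h =>
    absurd (h1max (v :: a :: t1) (List.isChain_cons_cons.mpr ⟨h.symm, h1⟩)
      (List.nodup_cons.mpr ⟨hv1, h1'⟩)) (by simp)
  have hbc : ¬ G.Adj b c := fun h =>
    absurd (h2max (c :: b :: t2) (List.isChain_cons_cons.mpr ⟨h.symm, h2⟩)
      (List.nodup_cons.mpr ⟨hcl2, h2'⟩)
      (by
        intro x hx
        rcases List.mem_cons.mp hx with rfl | hx
        · exact hcl1
        · exact h2d x hx)) (by simp)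
  have hbv : ¬ G.Adj b v := fun h =>
    absurd (h2max (v :: b :: t2) (List.isChain_cons_cons.mpr ⟨h.symm, h2⟩)
      (List.nodup_cons.mpr ⟨hv2, h2'⟩)
      (by
        intro x hx
        rcases List.mem_cons.mp hx with rfl | hx
        · exact hv1
        · exact h2d x hx)) (by simp)
  have hcv : ¬ G.Adj c v := fun h =>
    absurd (h3max (v :: c :: t3) (List.isChain_cons_cons.mpr ⟨h.symm, h3⟩)
      (List.nodup_cons.mpr ⟨hv3, h3'⟩)
      (by
        intro x hx
        rcases List.mem_cons.mp hx with rfl | hx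
        · exact ⟨hv1, hv2⟩
        · exact h3d x hx)) (by simp)
  refine hK4 ⟨a, b, c, v, ?_, hab, hac, hav, hbc, hbv, hcv⟩
  have hab' : a ≠ b := fun h => hbl1 (h ▸ ha1)
  have hac' : a ≠ c := fun h => hcl1 (h ▸ ha1)
  have hav' : a ≠ v := fun h => hv1 (h ▸ ha1)
  have hbc' : b ≠ c := fun h => hcl2 (h ▸ hb2)
  have hbv' : b ≠ v := fun h => hv2 (h ▸ hb2)
  have hcv' : c ≠ v := fun h => hv3 (h ▸ hc3)
  simp [hab', hac', hav', hbc', hbv', hcv']
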